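/- Let T be a 𝒞-consistent branching tree, ε > 0, and let x, y, z ∈ ⋂𝒞 be such that z ≻_{ε,T} y and y ⪰_T x. Then z ≻_{ε,T} x. -/

import Mathlib

open Set

/-- Apply a signed index list (index, sign) to a point, giving the vector
`(sign(i₁)·x_{|i₁|}, …, sign(i_k)·x_{|i_k|})` as a list of reals.
`true` encodes a positive sign, `false` a negative sign. -/
def sigApply {n : ℕ} (σ : List (Fin n × Bool)) (x : Fin n → ℝ) : List ℝ :=
  σ.map (fun p => if p.2 then x p.1 else -(x p.1))

/-- Strict ε-lexicographic order `x ≻_ε y` on lists of reals: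
`x ≠ y` and, at the first index where they differ, `x i ≥ y i + ε`. -/
def lexGt (ε : ℝ) : List ℝ → List ℝ → Prop
  | a :: as, b :: bs => (a = b ∧ lexGt ε as bs) ∨ (a ≠ b ∧ b + ε ≤ a)
  | _, _ => False

/-- A branching tree `T = (V, E, B, σ)`: a finite arborescence (encoded by a
parent map from which every node reaches the root), a branching constraint
`B v ⊆ ℝⁿ` for every node with `B r = ℝⁿ`, and a list `σ v` of signed variable
indices with pairwise distinct absolute values for every node. -/
structure BranchingTree (n : ℕ) where
  V : Type
  fin : Fintype V
  root : V
  parent : V → Option V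
  parent_root : parent root = none
  parent_isSome : ∀ v, v ≠ root → (parent v).isSome
  reach_root : ∀ v, Relation.ReflTransGen (fun a b => parent a = some b) v root
  B : V → Set (Fin n → ℝ)
  B_root : B root = Set.univ
  sig : V → List (Fin n × Bool)
  sig_nodup : ∀ v, ((sig v).map Prod.fst).Nodup

namespace BranchingTree

variable {n : ℕ} (T : BranchingTree n)

/-- The set of children `δ⁺(u)` of a node. -/
def children (u : T.V) : Set T.V := {v | T.parent v = some u}

/-- A leaf is a node without children. -/
def IsLeaf (v : T.V) : Prop := T.children v = ∅

/-- The nodes on the root-to-`v` path (the ancestors of `v`, including `v`). -/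
def pathNodes (v : T.V) : Set T.V :=
  {u | Relation.ReflTransGen (fun a b => T.parent a = some b) v u}

/-- `ℬ_v`: the branching constraints attached to the nodes on the root-to-`v` path. -/
def pathCons (v : T.V) : Set (Set (Fin n → ℝ)) := T.B '' T.pathNodes v

/-- Depth of a node: the number of nodes on its root path. -/
noncomputable def depth (v : T.V) : ℕ := (T.pathNodes v).ncard

/-- The feasible region `⋂(𝒞 ∪ ℬ_v)` of node `v`. -/
def region (𝒞 : Set (Set (Fin n → ℝ))) (v : T.V) : Set (Fin n → ℝ) :=
  ⋂₀ (𝒞 ∪ T.pathCons v)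

/-- `T` is `𝒞`-consistent: (T3) the children of any non-leaf cover `⋂𝒞`;
(T5) `σ u` is a prefix of `σ v` for every child `v` of `u`;
(T6) every entry of `σ v (x)` is bounded above over `x ∈ ⋂𝒞`;
(T7) distinct children of `u` have `σ u`-disjoint branching constraints. -/
def Consistent (𝒞 : Set (Set (Fin n → ℝ))) : Prop :=
  (∀ u : T.V, (T.children u).Nonempty → ⋂₀ 𝒞 ⊆ ⋃ v ∈ T.children u, T.B v) ∧
  (∀ u v : T.V, v ∈ T.children u → T.sig u <+: T.sig v) ∧
  (∀ v : T.V, ∀ i : Fin (T.sig v).length,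
    BddAbove ((fun x => if ((T.sig v).get i).2 then x ((T.sig v).get i).1
      else -(x ((T.sig v).get i).1)) '' ⋂₀ 𝒞)) ∧
  (∀ u v w : T.V, v ∈ T.children u → w ∈ T.children u → v ≠ w →
    sigApply (T.sig u) '' T.B v ∩ sigApply (T.sig u) '' T.B w = ∅)

/-- `v` is a deepest common node `dcn(x,y)`: both `x` and `y` lie in the
feasible region of `v`, and `v` is deepest with this property. -/
def IsDCN (𝒞 : Set (Set (Fin n → ℝ))) (v : T.V) (x y : Fin n → ℝ) : Prop :=
  x ∈ T.region 𝒞 v ∧ y ∈ T.region 𝒞 v ∧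
  ∀ w : T.V, x ∈ T.region 𝒞 w → y ∈ T.region 𝒞 w → T.depth w ≤ T.depth v

/-- `x ⪰_T y` : with `v = dcn(x,y)`, `σ v (x) = σ v (y)` or `σ v (x) ≻_ε σ v (y)`. -/
def TreeGe (𝒞 : Set (Set (Fin n → ℝ))) (ε : ℝ) (x y : Fin n → ℝ) : Prop :=
  ∃ v : T.V, T.IsDCN 𝒞 v x y ∧
    (sigApply (T.sig v) x = sigApply (T.sig v) y ∨
      lexGt ε (sigApply (T.sig v) x) (sigApply (T.sig v) y))

/-- `x ≻_{ε,T} y` : with `v = dcn(x,y)`, `σ v (x) ≻_ε σ v (y)`. -/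
def TreeGt (𝒞 : Set (Set (Fin n → ℝ))) (ε : ℝ) (x y : Fin n → ℝ) : Prop :=
  ∃ v : T.V, T.IsDCN 𝒞 v x y ∧
    lexGt ε (sigApply (T.sig v) x) (sigApply (T.sig v) y)

end BranchingTree

/-- A configuration `(𝒞, 𝒟, g, z, T, ε)`. -/
structure Config (n : ℕ) where
  core : Set (Set (Fin n → ℝ))
  derived : Set (Set (Fin n → ℝ))
  g : (Fin n → ℝ) → ℝ
  z : WithTop ℝ
  tree : BranchingTree n
  eps : ℝ

/-- `(F, f)`-validity of a configuration: (V1) the tree is core-consistent and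
`ε > 0`; (V2) if `z < ∞` there is `x ∈ F` with `f x ≤ z`; (V3) for every real
`ẑ < z`, `F` contains a point of `f`-value `≤ ẑ` iff `⋂𝒞` contains a point of
`g`-value `≤ ẑ`; (V4) every `x ∈ ⋂𝒞` with `g x < z` is dominated by some
`y ∈ ⋂(𝒞 ∪ 𝒟)` with `y ⪰_T x` and `g y ≤ g x`. -/
def Config.Valid {n : ℕ} (F : Set (Fin n → ℝ)) (f : (Fin n → ℝ) → ℝ)
    (K : Config n) : Prop :=
  (K.tree.Consistent K.core ∧ 0 < K.eps) ∧
  (K.z < ⊤ → ∃ x ∈ F, (f x : WithTop ℝ) ≤ K.z) ∧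
  (∀ zh : ℝ, (zh : WithTop ℝ) < K.z →
    ((∃ x ∈ F, f x ≤ zh) ↔ ∃ x ∈ ⋂₀ K.core, K.g x ≤ zh)) ∧
  (∀ x ∈ ⋂₀ K.core, (K.g x : WithTop ℝ) < K.z →
    ∃ y ∈ ⋂₀ (K.core ∪ K.derived), K.tree.TreeGe K.core K.eps y x ∧ K.g y ≤ K.g x)

/-- The implication constraint `[𝒜 ⇝ C] = (ℝⁿ \ ⋂𝒜) ∪ C`. -/
def implCon {n : ℕ} (𝒜 : Set (Set (Fin n → ℝ))) (C : Set (Fin n → ℝ)) :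
    Set (Fin n → ℝ) := (⋂₀ 𝒜)ᶜ ∪ C


section Aux

open Relation

namespace BranchingTree

variable {n : ℕ} {T : BranchingTree n} {𝒞 : Set (Set (Fin n → ℝ))}

lemma no_cycle (v : T.V) :
    ¬ Relation.TransGen (fun a b => T.parent a = some b) v v := by
  have h := T.reach_root v
  induction h using Relation.ReflTransGen.head_induction_on with
  | refl =>
    intro hc
    obtain ⟨b, hb, -⟩ := (Relation.TransGen.head'_iff).mp hc
    rw [T.parent_root] at hb
    exact absurd hb (by simp)
  | head hstep hrest ih =>
    intro hc
    obtain ⟨b, hb, hba⟩ := (Relation.TransGen.head'_iff).mp hc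
    rw [hstep] at hb
    obtain rfl := Option.some_injective _ hb.symm
    exact ih (Relation.TransGen.tail' hba hstep)

lemma rtg_antisymm {u v : T.V}
    (h1 : Relation.ReflTransGen (fun a b => T.parent a = some b) u v)
    (h2 : Relation.ReflTransGen (fun a b => T.parent a = some b) v u) : u = v := by
  rcases h1.cases_head with rfl | ⟨c, hc, hcv⟩
  · rfl
  · exact absurd (Relation.TransGen.head' (r := fun a b => T.parent a = some b) hc (hcv.trans h2)) (no_cycle u)

lemma mem_pathNodes_self (v : T.V) : v ∈ T.pathNodes v := Relation.ReflTransGen.refl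

lemma pathNodes_mono {u v : T.V}
    (h : Relation.ReflTransGen (fun a b => T.parent a = some b) v u) :
    T.pathNodes u ⊆ T.pathNodes v := fun _ ha => h.trans ha

lemma depth_lt {u v : T.V}
    (h : Relation.ReflTransGen (fun a b => T.parent a = some b) v u) (hne : v ≠ u) :
    T.depth u < T.depth v := by
  haveI := T.fin
  apply Set.ncard_lt_ncard _ (Set.toFinite _)
  rw [Set.ssubset_def]
  refine ⟨pathNodes_mono h, fun hsub => ?_⟩
  exact hne (rtg_antisymm h (hsub (mem_pathNodes_self v)))

lemma mem_region_iff {p : Fin n → ℝ} {v : T.V} :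
    p ∈ T.region 𝒞 v ↔ p ∈ ⋂₀ 𝒞 ∧ ∀ a ∈ T.pathNodes v, p ∈ T.B a := by
  simp only [BranchingTree.region, BranchingTree.pathCons, Set.sInter_union,
    Set.mem_inter_iff, Set.sInter_image, Set.mem_iInter, Set.mem_sInter]

lemma region_mono {u v : T.V}
    (h : Relation.ReflTransGen (fun a b => T.parent a = some b) v u) :
    T.region 𝒞 v ⊆ T.region 𝒞 u := by
  intro p hp
  rw [mem_region_iff] at hp ⊢
  exact ⟨hp.1, fun a ha => hp.2 a (pathNodes_mono h ha)⟩

lemma pathNodes_child {c u : T.V} (hc : T.parent c = some u) :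
    T.pathNodes c = insert c (T.pathNodes u) := by
  ext a
  constructor
  · intro ha
    rcases ha.cases_head with rfl | ⟨b, hb, hba⟩
    · exact Set.mem_insert _ _
    · have hbu : b = u := Option.some_injective _ (hb.symm.trans hc)
      subst hbu
      exact Set.mem_insert_of_mem _ hba
  · rintro (rfl | ha)
    · exact Relation.ReflTransGen.refl
    · exact Relation.ReflTransGen.head hc ha

lemma mem_region_child {p : Fin n → ℝ} {c u : T.V} (hp : p ∈ T.region 𝒞 u)
    (hc : T.parent c = some u) (hB : p ∈ T.B c) : p ∈ T.region 𝒞 c := by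
  rw [mem_region_iff] at hp ⊢
  refine ⟨hp.1, fun a ha => ?_⟩
  rw [pathNodes_child hc] at ha
  rcases ha with rfl | ha
  · exact hB
  · exact hp.2 a ha

lemma pathNodes_root : T.pathNodes T.root = {T.root} := by
  ext a
  simp only [Set.mem_singleton_iff]
  constructor
  · intro h
    rcases h.cases_head with rfl | ⟨b, hb, -⟩
    · rfl
    · rw [T.parent_root] at hb; exact absurd hb (by simp)
  · rintro rfl
    exact Relation.ReflTransGen.refl

lemma mem_region_root {p : Fin n → ℝ} (hp : p ∈ ⋂₀ 𝒞) : p ∈ T.region 𝒞 T.root := by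
  rw [mem_region_iff]
  refine ⟨hp, fun a ha => ?_⟩
  rw [pathNodes_root] at ha
  rcases ha with rfl
  rw [T.B_root]
  trivial

lemma sig_prefix (hT : T.Consistent 𝒞) {u v : T.V}
    (h : Relation.ReflTransGen (fun a b => T.parent a = some b) v u) :
    T.sig u <+: T.sig v := by
  induction h using Relation.ReflTransGen.head_induction_on with
  | refl => exact List.prefix_refl _
  | head hstep hrest ih => exact ih.trans (hT.2.1 _ _ hstep)

lemma B_disjoint (hT : T.Consistent 𝒞) {u v w : T.V} {p : Fin n → ℝ}
    (hv : T.parent v = some u) (hw : T.parent w = some u) (hne : v ≠ w)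
    (hpv : p ∈ T.B v) (hpw : p ∈ T.B w) : False := by
  have h7 := hT.2.2.2 u v w hv hw hne
  have hm : sigApply (T.sig u) p ∈
      sigApply (T.sig u) '' T.B v ∩ sigApply (T.sig u) '' T.B w :=
    ⟨⟨p, hpv, rfl⟩, ⟨p, hpw, rfl⟩⟩
  rw [h7] at hm
  exact hm

lemma exists_child {w u : T.V}
    (h : Relation.ReflTransGen (fun a b => T.parent a = some b) w u) (hne : w ≠ u) :
    ∃ c, T.parent c = some u ∧
      Relation.ReflTransGen (fun a b => T.parent a = some b) w c := by
  rcases h.cases_tail with rfl | ⟨c, hwc, hcu⟩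
  · exact (hne rfl).elim
  · exact ⟨c, hcu, hwc⟩

lemma comparable (hT : T.Consistent 𝒞) {p : Fin n → ℝ} {v w : T.V}
    (hpv : p ∈ T.region 𝒞 v) (hpw : p ∈ T.region 𝒞 w) :
    Relation.ReflTransGen (fun a b => T.parent a = some b) v w ∨
      Relation.ReflTransGen (fun a b => T.parent a = some b) w v := by
  classical
  haveI := T.fin
  suffices h : ∀ N (v w : T.V), T.depth v ≤ N → p ∈ T.region 𝒞 v → p ∈ T.region 𝒞 w →
      Relation.ReflTransGen (fun a b => T.parent a = some b) v w ∨
      Relation.ReflTransGen (fun a b => T.parent a = some b) w v from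
    h (T.depth v) v w le_rfl hpv hpw
  intro N
  induction N with
  | zero =>
    intro v w hd _ _
    have h0 : 0 < T.depth v :=
      Set.ncard_pos (Set.toFinite _) |>.mpr ⟨v, mem_pathNodes_self v⟩
    omega
  | succ N ih =>
    intro v w hd hpv hpw
    by_cases hv : v = T.root
    · subst hv
      exact Or.inr (T.reach_root w)
    · obtain ⟨v0, hv0⟩ := Option.isSome_iff_exists.mp (T.parent_isSome v hv)
      have hvv0 : Relation.ReflTransGen (fun a b => T.parent a = some b) v v0 :=
        Relation.ReflTransGen.single hv0
      have hnev : v ≠ v0 := by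
        intro h
        exact no_cycle v (Relation.TransGen.single (h ▸ hv0))
      have hdlt : T.depth v0 < T.depth v := depth_lt hvv0 hnev
      have hpv0 : p ∈ T.region 𝒞 v0 := region_mono hvv0 hpv
      rcases ih v0 w (by omega) hpv0 hpw with h | h
      · exact Or.inl (Relation.ReflTransGen.head hv0 h)
      · by_cases hwv0 : w = v0
        · subst hwv0
          exact Or.inl hvv0
        · obtain ⟨c, hc, hwc⟩ := exists_child h hwv0
          by_cases hcv : c = v
          · subst hcv
            exact Or.inr hwc
          · exfalso
            have hpBv : p ∈ T.B v := (mem_region_iff.mp hpv).2 v (mem_pathNodes_self v)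
            have hpBc : p ∈ T.B c := (mem_region_iff.mp hpw).2 c hwc
            exact B_disjoint hT hc hv0 hcv hpBc hpBv

lemma exists_dcn (hT : T.Consistent 𝒞) {z x : Fin n → ℝ}
    (hz : z ∈ ⋂₀ 𝒞) (hx : x ∈ ⋂₀ 𝒞) : ∃ w, T.IsDCN 𝒞 w z x := by
  classical
  haveI := T.fin
  have hS : {w : T.V | z ∈ T.region 𝒞 w ∧ x ∈ T.region 𝒞 w}.Nonempty :=
    ⟨T.root, mem_region_root hz, mem_region_root hx⟩
  obtain ⟨w, hw, hmax⟩ := Set.Finite.exists_maximalFor T.depth _ (Set.toFinite _) hS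
  refine ⟨w, hw.1, hw.2, fun a haz hax => ?_⟩
  by_contra hlt
  push_neg at hlt
  have := hmax (j := a) ⟨haz, hax⟩ hlt.le
  omega

end BranchingTree

lemma sigApply_append {n : ℕ} (σ τ : List (Fin n × Bool)) (x : Fin n → ℝ) :
    sigApply (σ ++ τ) x = sigApply σ x ++ sigApply τ x := List.map_append

lemma sigApply_length {n : ℕ} (σ : List (Fin n × Bool)) (x : Fin n → ℝ) :
    (sigApply σ x).length = σ.length := List.length_map _

lemma lexGt_trans {ε : ℝ} (hε : 0 < ε) :
    ∀ (a b c : List ℝ), lexGt ε a b → lexGt ε b c → lexGt ε a c := by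
  intro a
  induction a with
  | nil => intro b c hab _; cases b <;> simp [lexGt] at hab
  | cons x xs ih =>
    intro b c hab hbc
    cases b with
    | nil => simp [lexGt] at hab
    | cons y ys =>
      cases c with
      | nil => simp [lexGt] at hbc
      | cons w ws =>
        simp only [lexGt] at hab hbc ⊢
        rcases hab with ⟨h1, h2⟩ | ⟨h1, h2⟩ <;> rcases hbc with ⟨h3, h4⟩ | ⟨h3, h4⟩
        · exact Or.inl ⟨h1.trans h3, ih ys ws h2 h4⟩
        · subst h1; exact Or.inr ⟨h3, h4⟩
        · subst h3; exact Or.inr ⟨h1, h2⟩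
        · refine Or.inr ⟨?_, by linarith⟩
          intro h; subst h; linarith

lemma lexGt_append {ε : ℝ} :
    ∀ (a b s t : List ℝ), lexGt ε a b → lexGt ε (a ++ s) (b ++ t) := by
  intro a
  induction a with
  | nil => intro b s t hab; cases b <;> simp [lexGt] at hab
  | cons x xs ih =>
    intro b s t hab
    cases b with
    | nil => simp [lexGt] at hab
    | cons y ys =>
      simp only [List.cons_append]
      simp only [lexGt] at hab ⊢
      rcases hab with ⟨h1, h2⟩ | ⟨h1, h2⟩
      · exact Or.inl ⟨h1, ih ys s t h2⟩
      · exact Or.inr ⟨h1, h2⟩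

lemma lexGt_prefix {ε : ℝ} :
    ∀ (a b s t : List ℝ), a.length = b.length → lexGt ε (a ++ s) (b ++ t) →
      a = b ∨ lexGt ε a b := by
  intro a
  induction a with
  | nil =>
    intro b s t hlen _
    left
    cases b with
    | nil => rfl
    | cons y ys => simp at hlen
  | cons x xs ih =>
    intro b s t hlen h
    cases b with
    | nil => simp at hlen
    | cons y ys =>
      simp only [List.cons_append] at h
      simp only [lexGt] at h ⊢
      rcases h with ⟨h1, h2⟩ | ⟨h1, h2⟩
      · rcases ih ys s t (by simpa using hlen) h2 with h3 | h3
        · exact Or.inl (by rw [h1, h3])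
        · exact Or.inr (Or.inl ⟨h1, h3⟩)
      · exact Or.inr (Or.inr ⟨h1, h2⟩)

end Aux

/-- for a `𝒞`-consistent branching tree `T`, `ε > 0`, and
`x, y, z ∈ ⋂𝒞` with `z ≻_{ε,T} y` and `y ⪰_T x`, we have `z ≻_{ε,T} x`. -/
theorem treeGt_of_treeGt_treeGe {n : ℕ} (𝒞 : Set (Set (Fin n → ℝ)))
    (T : BranchingTree n) (ε : ℝ) (hT : T.Consistent 𝒞) (hε : 0 < ε)
    (x y z : Fin n → ℝ) (hx : x ∈ ⋂₀ 𝒞) (hy : y ∈ ⋂₀ 𝒞) (hz : z ∈ ⋂₀ 𝒞)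
    (hzy : T.TreeGt 𝒞 ε z y) (hyx : T.TreeGe 𝒞 ε y x) :
    T.TreeGt 𝒞 ε z x := by
  classical
  obtain ⟨v, hvdcn, hvlex⟩ := hzy
  obtain ⟨u, hudcn, hules⟩ := hyx
  have hcmp := BranchingTree.comparable hT hudcn.1 hvdcn.2.1
  have main : ∃ a : T.V, z ∈ T.region 𝒞 a ∧ x ∈ T.region 𝒞 a ∧
      lexGt ε (sigApply (T.sig a) z) (sigApply (T.sig a) x) := by
    by_cases hA : Relation.ReflTransGen (fun a b => T.parent a = some b) u v
    · -- v is an ancestor of u : work at v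
      refine ⟨v, hvdcn.1, BranchingTree.region_mono hA hudcn.2.1, ?_⟩
      obtain ⟨ρ, hρ⟩ := BranchingTree.sig_prefix hT hA
      rcases hules with heq | hgt
      · have h1 : sigApply (T.sig v) y ++ sigApply ρ y
            = sigApply (T.sig v) x ++ sigApply ρ x := by
          rw [← sigApply_append, ← sigApply_append, hρ, heq]
        have h2 := (List.append_inj h1 (by simp [sigApply_length])).1
        exact h2 ▸ hvlex
      · have hgt' := lexGt_prefix (sigApply (T.sig v) y) (sigApply (T.sig v) x)
          (sigApply ρ y) (sigApply ρ x) (by simp [sigApply_length])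
          (by rw [← sigApply_append, ← sigApply_append, hρ]; exact hgt)
        rcases hgt' with h3 | h3
        · exact h3 ▸ hvlex
        · exact lexGt_trans hε _ _ _ hvlex h3
    · -- u is a strict ancestor of v : work at u
      have hvu : Relation.ReflTransGen (fun a b => T.parent a = some b) v u := by
        rcases hcmp with h | h
        · exact absurd h hA
        · exact h
      have hneu : v ≠ u := by
        rintro rfl
        exact hA Relation.ReflTransGen.refl
      refine ⟨u, BranchingTree.region_mono hvu hvdcn.1, hudcn.2.1, ?_⟩
      obtain ⟨ρ, hρ⟩ := BranchingTree.sig_prefix hT hvu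
      have hres := lexGt_prefix (sigApply (T.sig u) z) (sigApply (T.sig u) y)
        (sigApply ρ z) (sigApply ρ y) (by simp [sigApply_length])
        (by rw [← sigApply_append, ← sigApply_append, hρ]; exact hvlex)
      rcases hules with heq | hgt
      · exfalso
        obtain ⟨c0, hc0, -⟩ := BranchingTree.exists_child hvu hneu
        have hchild : (T.children u).Nonempty := ⟨c0, hc0⟩
        obtain ⟨cx, hcx, hxB⟩ := Set.mem_iUnion₂.mp (hT.1 u hchild hx)
        obtain ⟨cy, hcy, hyB⟩ := Set.mem_iUnion₂.mp (hT.1 u hchild hy)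
        have hcxcy : cx = cy := by
          by_contra hne2
          have h7 := hT.2.2.2 u cx cy hcx hcy hne2
          have hm : sigApply (T.sig u) x ∈
              sigApply (T.sig u) '' T.B cx ∩ sigApply (T.sig u) '' T.B cy :=
            ⟨⟨x, hxB, rfl⟩, ⟨y, hyB, heq⟩⟩
          rw [h7] at hm
          exact hm
        subst hcxcy
        have hyreg : y ∈ T.region 𝒞 cx := BranchingTree.mem_region_child hudcn.1 hcx hyB
        have hxreg : x ∈ T.region 𝒞 cx := BranchingTree.mem_region_child hudcn.2.1 hcx hxB
        have hle := hudcn.2.2 cx hyreg hxreg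
        have hnecx : cx ≠ u := by
          intro h
          exact BranchingTree.no_cycle u (Relation.TransGen.single (h ▸ hcx))
        have hlt := BranchingTree.depth_lt (Relation.ReflTransGen.single hcx) hnecx
        omega
      · rcases hres with heqz | hgtz
        · exact heqz ▸ hgt
        · exact lexGt_trans hε _ _ _ hgtz hgt
  obtain ⟨a, haz, hax, hlex⟩ := main
  obtain ⟨w, hwdcn⟩ := BranchingTree.exists_dcn hT hz hx
  refine ⟨w, hwdcn, ?_⟩
  have hc2 := BranchingTree.comparable hT haz hwdcn.1
  have haw : Relation.ReflTransGen (fun a b => T.parent a = some b) w a := by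
    rcases hc2 with h | h
    · rcases eq_or_ne a w with rfl | hne
      · exact Relation.ReflTransGen.refl
      · have h1 := hwdcn.2.2 a haz hax
        have h2 := BranchingTree.depth_lt h hne
        omega
    · exact h
  obtain ⟨ρ, hρ⟩ := BranchingTree.sig_prefix hT haw
  rw [← hρ, sigApply_append, sigApply_append]
  exact lexGt_append _ _ _ _ hlex
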